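/- Let X and Y be real Banach spaces. Then 𝒯^cc(X ⊕_1 Y) ≤ min{𝒯^cc(X), 𝒯^cc(Y)}, where X ⊕_1 Y is the ℓ_1-sum of X and Y. -/

import Mathlib

open Metric Set

noncomputable section

variable (X : Type*) [NormedAddCommGroup X] [NormedSpace ℝ X]

/-- A subset `U` of `X` is weakly open if it is open in the weak topology of `X`. -/
def IsWeaklyOpen (U : Set X) : Prop := IsOpen (toWeakSpace ℝ X '' U)

/-- The slice `S(B_X, f, α) = {x ∈ B_X : f x > 1 - α}` of the closed unit ball of `X`. -/
def sliceSet (f : X →L[ℝ] ℝ) (α : ℝ) : Set X :=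
  {y ∈ closedBall (0 : X) 1 | 1 - α < f y}

/-- `S` is a slice of the closed unit ball of `X`, i.e. `S = S(B_X, f, α)` for some norm-one
functional `f` and some `α > 0`. -/
def IsSlice (S : Set X) : Prop :=
  ∃ f : X →L[ℝ] ℝ, ‖f‖ = 1 ∧ ∃ α > (0 : ℝ), S = sliceSet X f α

/-- The Daugavet index of thickness `𝒯ˢ(X)`: the infimum of all `r > 0` such that some slice of
the closed unit ball is contained in a closed ball of radius `r` centered at a point of the unit
sphere. -/
def Ts : ℝ :=
  sInf {r : ℝ | 0 < r ∧ ∃ x : X, ‖x‖ = 1 ∧ ∃ S : Set X, IsSlice X S ∧ S ⊆ closedBall x r}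

/-- `W` is a nonempty relatively weakly open subset of the closed unit ball of `X`. -/
def IsRelWeakOpen (W : Set X) : Prop :=
  W.Nonempty ∧ ∃ U : Set X, IsWeaklyOpen X U ∧ W = closedBall (0 : X) 1 ∩ U

/-- The Daugavet index of thickness `𝒯(X)`: the infimum of all `r > 0` such that some nonempty
relatively weakly open subset of the closed unit ball is contained in a closed ball of radius `r`
centered at a point of the unit sphere. -/
def Tw : ℝ :=
  sInf {r : ℝ | 0 < r ∧ ∃ x : X, ‖x‖ = 1 ∧ ∃ W : Set X, IsRelWeakOpen X W ∧
    W ⊆ closedBall x r}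

/-- The convex combination `∑ i, l i • W i` of the sets `W i` (the set of all sums
`∑ i, l i • w i` with `w i ∈ W i`). -/
def comboSet {n : ℕ} (l : Fin n → ℝ) (W : Fin n → Set X) : Set X :=
  {z : X | ∃ w : Fin n → X, (∀ i, w i ∈ W i) ∧ z = ∑ i, l i • w i}

/-- The Daugavet index of thickness `𝒯ᶜᶜ(X)`: the infimum of all `r > 0` such that some convex
combination of nonempty relatively weakly open subsets of the closed unit ball is contained in a
closed ball of radius `r` centered at a point of the unit sphere. -/
def Tcc : ℝ :=
  sInf {r : ℝ | 0 < r ∧ ∃ x : X, ‖x‖ = 1 ∧ ∃ (n : ℕ) (l : Fin n → ℝ) (W : Fin n → Set X),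
    (∀ i, 0 ≤ l i) ∧ (∑ i, l i) = 1 ∧ (∀ i, IsRelWeakOpen X (W i)) ∧
    comboSet X l W ⊆ closedBall x r}

/-- `X` has the Daugavet property: for every `x` in the unit sphere, every `ε > 0` and every
slice `S` of the closed unit ball there exists `y ∈ S` with `‖x - y‖ ≥ 2 - ε`. -/
def DaugavetProperty : Prop :=
  ∀ x : X, ‖x‖ = 1 → ∀ ε > (0 : ℝ), ∀ S : Set X, IsSlice X S → ∃ y ∈ S, 2 - ε ≤ ‖x - y‖

section Aux

open scoped ENNReal RealInnerProductSpace

/-- The defining set for `Tcc`. -/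
def TccSet (E : Type*) [NormedAddCommGroup E] [NormedSpace ℝ E] : Set ℝ :=
  {r : ℝ | 0 < r ∧ ∃ x : E, ‖x‖ = 1 ∧ ∃ (n : ℕ) (l : Fin n → ℝ) (W : Fin n → Set E),
    (∀ i, 0 ≤ l i) ∧ (∑ i, l i) = 1 ∧ (∀ i, IsRelWeakOpen E (W i)) ∧
    comboSet E l W ⊆ closedBall x r}

lemma Tcc_eq_sInf (E : Type*) [NormedAddCommGroup E] [NormedSpace ℝ E] :
    Tcc E = sInf (TccSet E) := rfl

variable {E F G : Type*} [NormedAddCommGroup E] [NormedSpace ℝ E]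
  [NormedAddCommGroup F] [NormedSpace ℝ F] [NormedAddCommGroup G] [NormedSpace ℝ G]

lemma isWeaklyOpen_preimage (p : G →L[ℝ] E) {U : Set E} (h : IsWeaklyOpen E U) :
    IsWeaklyOpen G (p ⁻¹' U) := by
  show IsOpen (toWeakSpace ℝ G '' (p ⁻¹' U))
  have key : toWeakSpace ℝ G '' (p ⁻¹' U) = (WeakSpace.map p) ⁻¹' (toWeakSpace ℝ E '' U) := by
    ext z
    constructor
    · rintro ⟨w, hw, rfl⟩
      exact ⟨p w, hw, rfl⟩
    · rintro ⟨w, hw, hw2⟩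
      refine ⟨(toWeakSpace ℝ G).symm z, ?_, by simp⟩
      show p ((toWeakSpace ℝ G).symm z) ∈ U
      have h3 : p ((toWeakSpace ℝ G).symm z) = (toWeakSpace ℝ E).symm ((WeakSpace.map p) z) := rfl
      rw [h3, ← hw2]
      simpa using hw
  rw [key]
  exact (WeakSpace.map p).continuous.isOpen_preimage _ h

lemma isWeaklyOpen_lt (h : G →L[ℝ] ℝ) (c : ℝ) : IsWeaklyOpen G {z | c < h z} := by
  show IsOpen (toWeakSpace ℝ G '' {z | c < h z})
  have hc : Continuous fun z : WeakSpace ℝ G => h ((toWeakSpace ℝ G).symm z) :=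
    WeakBilin.eval_continuous ((topDualPairing ℝ G).flip) h
  have key : toWeakSpace ℝ G '' {z | c < h z}
      = {z : WeakSpace ℝ G | c < h ((toWeakSpace ℝ G).symm z)} := by
    ext z
    constructor
    · rintro ⟨w, hw, rfl⟩; exact hw
    · intro hz; exact ⟨(toWeakSpace ℝ G).symm z, hz, by simp⟩
  rw [key]
  exact isOpen_lt continuous_const hc

lemma isWeaklyOpen_inter {U V : Set E} (hU : IsWeaklyOpen E U) (hV : IsWeaklyOpen E V) :
    IsWeaklyOpen E (U ∩ V) := by
  show IsOpen (toWeakSpace ℝ E '' (U ∩ V))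
  rw [Set.image_inter (toWeakSpace ℝ E).injective]
  exact IsOpen.inter hU hV

lemma isWeaklyOpen_univ : IsWeaklyOpen E Set.univ := by
  show IsOpen (toWeakSpace ℝ E '' Set.univ)
  rw [Set.image_univ, (toWeakSpace ℝ E).surjective.range_eq]
  exact isOpen_univ

lemma exists_norm_one_mem (hinf : ¬ FiniteDimensional ℝ E) {U : Set E}
    (hU : IsWeaklyOpen E U) {w : E} (hw : w ∈ U) (hw1 : ‖w‖ ≤ 1) :
    ∃ w', w' ∈ U ∧ ‖w'‖ = 1 := by
  have hU' : IsOpen (toWeakSpace ℝ E '' U) := hU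
  replace hU' := isOpen_induced_iff.mp hU'
  obtain ⟨t, ht, htU⟩ := hU'
  have hwm : (fun (f : E →L[ℝ] ℝ) => f w) ∈ t := by
    have h1 : toWeakSpace ℝ E w ∈ toWeakSpace ℝ E '' U := ⟨w, hw, rfl⟩
    rw [← htU] at h1
    exact h1
  rw [isOpen_pi_iff] at ht
  obtain ⟨I, u, hu, hIu⟩ := ht _ hwm
  obtain ⟨e, he0, he⟩ : ∃ e : E, e ≠ 0 ∧ ∀ f ∈ I, f e = 0 := by
    by_contra hc
    push_neg at hc
    have hinj : Function.Injective
        (LinearMap.pi (fun i : I => ((i : E →L[ℝ] ℝ) : E →ₗ[ℝ] ℝ)) : E →ₗ[ℝ] (I → ℝ)) := by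
      rw [← LinearMap.ker_eq_bot, LinearMap.ker_eq_bot']
      intro m hm
      by_contra hm0
      obtain ⟨f, hfI, hf⟩ := hc m hm0
      have h2 := congrFun hm ⟨f, hfI⟩
      simp [LinearMap.pi_apply] at h2
      exact hf h2
    exact hinf (FiniteDimensional.of_injective _ hinj)
  have hne : (0:ℝ) < ‖e‖ := norm_pos_iff.mpr he0
  set T : ℝ := (‖w‖ + 1) / ‖e‖ with hT
  have hT0 : 0 ≤ T := div_nonneg (by positivity) hne.le
  have hcont : Continuous fun t : ℝ => ‖w + t • e‖ :=
    (continuous_const.add (continuous_id.smul continuous_const)).norm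
  have hgT : 1 ≤ ‖w + T • e‖ := by
    have h2 : ‖T • e‖ ≤ ‖w + T • e‖ + ‖w‖ := by
      calc ‖T • e‖ = ‖(w + T • e) - w‖ := by rw [add_sub_cancel_left]
        _ ≤ ‖w + T • e‖ + ‖w‖ := norm_sub_le _ _
    have hTe : ‖T • e‖ = ‖w‖ + 1 := by
      rw [norm_smul, Real.norm_of_nonneg hT0, hT, div_mul_cancel₀ _ hne.ne']
    linarith
  have h1 : (1:ℝ) ∈ Set.Icc ‖w + (0:ℝ) • e‖ ‖w + T • e‖ := by
    simp only [zero_smul, add_zero]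
    exact ⟨hw1, hgT⟩
  obtain ⟨t, _, htn⟩ := intermediate_value_Icc hT0 hcont.continuousOn h1
  refine ⟨w + t • e, ?_, htn⟩
  have h3 : toWeakSpace ℝ E (w + t • e) ∈ toWeakSpace ℝ E '' U := by
    rw [← htU]
    apply hIu
    intro f hf
    have hfe : f (w + t • e) = f w := by
      simp [map_add, map_smul, he f hf]
    show f (w + t • e) ∈ u f
    rw [hfe]
    exact (hu f hf).2
  obtain ⟨w', hw', hww⟩ := h3
  have h4 : w' = w + t • e := (toWeakSpace ℝ E).injective hww
  rwa [← h4]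

end Aux

section Aux2

open scoped ENNReal RealInnerProductSpace

variable {E F G : Type*} [NormedAddCommGroup E] [NormedSpace ℝ E]
  [NormedAddCommGroup F] [NormedSpace ℝ F] [NormedAddCommGroup G] [NormedSpace ℝ G]

lemma findim_exposed [FiniteDimensional ℝ E] [Nontrivial E] {ε : ℝ} (hε : 0 < ε) :
    ∃ (x₀ : E) (h : E →L[ℝ] ℝ) (c : ℝ), ‖x₀‖ = 1 ∧ c < h x₀ ∧
      ∀ u : E, ‖u‖ ≤ 1 → c < h u → ‖u - x₀‖ ≤ ε := by
  set e := (toEuclidean : E ≃L[ℝ] EuclideanSpace ℝ (Fin (Module.finrank ℝ E))) with he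
  have hcomp : IsCompact (closedBall (0:E) 1) := isCompact_closedBall 0 1
  have hcont : ContinuousOn (fun u : E => ‖e u‖) (closedBall 0 1) :=
    (e.continuous.norm).continuousOn
  obtain ⟨x₀, hx₀mem, hmax⟩ := hcomp.exists_isMaxOn ⟨0, by simp⟩ hcont
  set R := ‖e x₀‖ with hR
  have hx₀ball : ‖x₀‖ ≤ 1 := by simpa using hx₀mem
  obtain ⟨y, hy⟩ := exists_norm_eq E (zero_le_one)
  have hymem : y ∈ closedBall (0:E) 1 := by simp [hy]
  have hy0 : y ≠ 0 := by intro h; rw [h] at hy; simp at hy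
  have hRpos : 0 < R := by
    have h1 : 0 < ‖e y‖ := by
      simp only [norm_pos_iff]
      exact fun h => hy0 (by simpa using congrArg e.symm h)
    exact lt_of_lt_of_le h1 (hmax hymem)
  have hx₀0 : x₀ ≠ 0 := by
    intro h
    rw [hR, h] at hRpos
    simp at hRpos
  have hx₀1 : ‖x₀‖ = 1 := by
    by_contra hne
    have hlt : ‖x₀‖ < 1 := lt_of_le_of_ne hx₀ball hne
    have hpos : 0 < ‖x₀‖ := norm_pos_iff.mpr hx₀0
    have hzmem : ‖x₀‖⁻¹ • x₀ ∈ closedBall (0:E) 1 := by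
      simp [norm_smul, abs_of_pos (inv_pos.mpr hpos), inv_mul_cancel₀ hpos.ne']
    have h5 := hmax hzmem
    simp only [IsMaxOn, map_smul, norm_smul, Real.norm_eq_abs,
      abs_of_pos (inv_pos.mpr hpos)] at h5
    have h2 : ‖x₀‖⁻¹ * R ≤ R := by
      simpa [map_smul, norm_smul, abs_of_pos (inv_pos.mpr hpos)] using h5
    have h3 : (1:ℝ) < ‖x₀‖⁻¹ := (one_lt_inv₀ hpos).mpr hlt
    nlinarith
  set C := ‖((e.symm : EuclideanSpace ℝ (Fin (Module.finrank ℝ E)) ≃L[ℝ] E) :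
      EuclideanSpace ℝ (Fin (Module.finrank ℝ E)) →L[ℝ] E)‖ with hC
  have hC0 : 0 ≤ C := norm_nonneg _
  set η := (ε / (C + 1))^2 / 2 with hη
  have hηpos : 0 < η := by positivity
  refine ⟨x₀, (innerSL ℝ (e x₀)).comp (e : E →L[ℝ] EuclideanSpace ℝ (Fin (Module.finrank ℝ E))),
    R^2 - η, hx₀1, ?_, ?_⟩
  · have hthis : ((innerSL ℝ (e x₀)).comp (e : E →L[ℝ] _)) x₀ = R^2 := by
      rw [ContinuousLinearMap.comp_apply]
      have h1 : (innerSL ℝ (e x₀)) ((e : E →L[ℝ] EuclideanSpace ℝ (Fin (Module.finrank ℝ E))) x₀)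
          = ⟪e x₀, e x₀⟫ := rfl
      rw [h1, real_inner_self_eq_norm_sq]
    rw [hthis]
    linarith
  · intro u hu1 hu2
    have humem : u ∈ closedBall (0:E) 1 := by simpa using hu1
    have huR : ‖e u‖ ≤ R := hmax humem
    have hinner : R^2 - η < ⟪e x₀, e u⟫ := by simpa using hu2
    have hsq : ‖e u - e x₀‖^2 < 2 * η := by
      have h6 := norm_sub_sq_real (e u) (e x₀)
      have hcomm : ⟪e u, e x₀⟫ = ⟪e x₀, e u⟫ := real_inner_comm _ _
      nlinarith [sq_nonneg ‖e u‖, norm_nonneg (e u)]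
    have hlt : ‖e u - e x₀‖ < ε / (C + 1) := by
      have h2η : 2 * η = (ε / (C + 1))^2 := by rw [hη]; ring
      rw [h2η] at hsq
      by_contra hge
      push_neg at hge
      nlinarith [norm_nonneg (e u - e x₀), div_pos hε (show (0:ℝ) < C + 1 by linarith),
        sq_nonneg (‖e u - e x₀‖ - ε / (C+1))]
    have heq : e.symm (e u - e x₀) = u - x₀ := by
      simp [map_sub]
    have h7 : ‖u - x₀‖ ≤ C * ‖e u - e x₀‖ := by
      rw [← heq]
      exact ((e.symm : EuclideanSpace ℝ (Fin (Module.finrank ℝ E)) →L[ℝ] E)).le_opNorm _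
    have hfin : C * ‖e u - e x₀‖ ≤ C * (ε / (C+1)) :=
      mul_le_mul_of_nonneg_left hlt.le hC0
    have h8 : ‖u - x₀‖ ≤ C * (ε / (C+1)) := le_trans h7 hfin
    have hCe : C * (ε / (C+1)) ≤ ε := by
      rw [div_eq_inv_mul]
      have h1 : C * ((C+1)⁻¹ * ε) = (C * (C+1)⁻¹) * ε := by ring
      rw [h1]
      have h2 : C * (C+1)⁻¹ ≤ 1 := by
        rw [mul_inv_le_iff₀ (by linarith)]
        linarith
      nlinarith
    linarith

lemma mem_TccSet_infdim (hinf : ¬ FiniteDimensional ℝ E)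
    (p : G →L[ℝ] E) (q : G →L[ℝ] F) (j : E →L[ℝ] G)
    (hnorm : ∀ z, ‖z‖ = ‖p z‖ + ‖q z‖) (hpj : ∀ x, p (j x) = x) (hqj : ∀ x, q (j x) = 0)
    {r δ : ℝ} (hδ : 0 < δ) (hr : r ∈ TccSet E) : r + δ ∈ TccSet G := by
  obtain ⟨hrpos, x, hx, n, l, W, hl0, hl1, hW, hsub⟩ := hr
  choose U hUopen hWU using fun i => (hW i).2
  have hpts : ∀ i, ∃ w, w ∈ U i ∧ ‖w‖ = 1 := by
    intro i
    obtain ⟨w₀, hw₀⟩ := (hW i).1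
    rw [hWU i] at hw₀
    exact exists_norm_one_mem hinf (hUopen i) hw₀.2 (mem_closedBall_zero_iff.mp hw₀.1)
  choose w hwU hw1 using hpts
  have hfs : ∀ i, ∃ f : E →L[ℝ] ℝ, ‖f‖ = 1 ∧ f (w i) = 1 := by
    intro i
    have hwne : w i ≠ 0 := by
      intro h
      have h9 := hw1 i
      rw [h] at h9
      simp at h9
    obtain ⟨f, hf1, hfx⟩ := exists_dual_vector ℝ (w i) (norm_ne_zero_iff.mpr hwne)
    refine ⟨f, hf1, ?_⟩
    rw [hfx, hw1 i]
    norm_num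
  choose f hf1 hfw using hfs
  have hjnorm : ∀ a : E, ‖j a‖ = ‖a‖ := by
    intro a
    rw [hnorm (j a), hpj, hqj]
    simp
  refine ⟨by linarith, j x, by rw [hjnorm, hx], n, l,
    fun i => closedBall 0 1 ∩ ((p ⁻¹' (U i)) ∩ {z | 1 - δ < f i (p z)}), hl0, hl1, ?_, ?_⟩
  · intro i
    refine ⟨⟨j (w i), ?_⟩, (p ⁻¹' (U i)) ∩ {z | 1 - δ < f i (p z)},
      isWeaklyOpen_inter (isWeaklyOpen_preimage p (hUopen i))
        (isWeaklyOpen_lt ((f i).comp p) (1 - δ)), rfl⟩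
    refine ⟨mem_closedBall_zero_iff.mpr (by rw [hjnorm, hw1 i]), ?_, ?_⟩
    · show p (j (w i)) ∈ U i
      rw [hpj]
      exact hwU i
    · show 1 - δ < f i (p (j (w i)))
      rw [hpj, hfw i]
      linarith
  · rintro z ⟨v, hv, rfl⟩
    have hui : ∀ i, p (v i) ∈ W i := by
      intro i
      rw [hWU i]
      have hb : ‖v i‖ ≤ 1 := mem_closedBall_zero_iff.mp (hv i).1
      have h1 : ‖p (v i)‖ ≤ 1 := by
        have h2 := hnorm (v i)
        have h3 := norm_nonneg (q (v i))
        linarith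
      exact ⟨mem_closedBall_zero_iff.mpr h1, (hv i).2.1⟩
    have hqi : ∀ i, ‖q (v i)‖ ≤ δ := by
      intro i
      have hb : ‖v i‖ ≤ 1 := mem_closedBall_zero_iff.mp (hv i).1
      have hfv : 1 - δ < f i (p (v i)) := (hv i).2.2
      have hfle : f i (p (v i)) ≤ ‖p (v i)‖ := by
        calc f i (p (v i)) ≤ ‖f i (p (v i))‖ := le_abs_self _
          _ ≤ ‖f i‖ * ‖p (v i)‖ := (f i).le_opNorm _
          _ = ‖p (v i)‖ := by rw [hf1 i, one_mul]
      have h2 := hnorm (v i)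
      linarith
    rw [mem_closedBall, dist_eq_norm]
    have hsplit : ‖(∑ i, l i • v i) - j x‖
        = ‖p (∑ i, l i • v i) - x‖ + ‖q (∑ i, l i • v i)‖ := by
      rw [hnorm ((∑ i, l i • v i) - j x), map_sub, map_sub, hpj, hqj, sub_zero]
    rw [hsplit]
    have hpz : p (∑ i, l i • v i) ∈ comboSet E l W := by
      refine ⟨fun i => p (v i), hui, ?_⟩
      rw [map_sum]
      simp [map_smul]
    have h1 : ‖p (∑ i, l i • v i) - x‖ ≤ r := by
      have h2 := hsub hpz
      rwa [mem_closedBall, dist_eq_norm] at h2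
    have h2 : ‖q (∑ i, l i • v i)‖ ≤ δ := by
      rw [map_sum]
      calc ‖∑ i, q (l i • v i)‖ ≤ ∑ i, ‖q (l i • v i)‖ := norm_sum_le _ _
        _ = ∑ i, l i * ‖q (v i)‖ := by
            refine Finset.sum_congr rfl fun i _ => ?_
            rw [map_smul, norm_smul, Real.norm_of_nonneg (hl0 i)]
        _ ≤ ∑ i, l i * δ :=
            Finset.sum_le_sum (fun i _ => mul_le_mul_of_nonneg_left (hqi i) (hl0 i))
        _ = δ := by rw [← Finset.sum_mul, hl1, one_mul]
    linarith

lemma mem_TccSet_findim [FiniteDimensional ℝ E] [Nontrivial E]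
    (p : G →L[ℝ] E) (q : G →L[ℝ] F) (j : E →L[ℝ] G)
    (hnorm : ∀ z, ‖z‖ = ‖p z‖ + ‖q z‖) (hpj : ∀ x, p (j x) = x) (hqj : ∀ x, q (j x) = 0)
    {ε : ℝ} (hε : 0 < ε) : ε ∈ TccSet G := by
  obtain ⟨x₀, h, c, hx₀, hc, hcl⟩ := findim_exposed (E := E) (ε := ε/4) (by linarith)
  have hjnorm : ∀ a : E, ‖j a‖ = ‖a‖ := by
    intro a
    rw [hnorm (j a), hpj, hqj]
    simp
  refine ⟨hε, j x₀, by rw [hjnorm, hx₀], 1, (fun _ => 1),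
    (fun _ => closedBall 0 1 ∩ {z | c < h (p z)}), fun _ => zero_le_one, by simp, ?_, ?_⟩
  · intro i
    refine ⟨⟨j x₀, mem_closedBall_zero_iff.mpr (by rw [hjnorm, hx₀]), ?_⟩,
      {z | c < h (p z)}, isWeaklyOpen_lt (h.comp p) c, rfl⟩
    show c < h (p (j x₀))
    rw [hpj]
    exact hc
  · rintro z ⟨v, hv, rfl⟩
    have hsum : (∑ i : Fin 1, (1:ℝ) • v i) = v 0 := by
      rw [Fin.sum_univ_one, one_smul]
    rw [hsum]
    obtain ⟨hb, hcv⟩ := hv 0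
    have hb1 : ‖v 0‖ ≤ 1 := mem_closedBall_zero_iff.mp hb
    have hp1 : ‖p (v 0)‖ ≤ 1 := by
      have h2 := hnorm (v 0)
      have h3 := norm_nonneg (q (v 0))
      linarith
    have hclose : ‖p (v 0) - x₀‖ ≤ ε/4 := hcl (p (v 0)) hp1 hcv
    have hpge : 1 - ε/4 ≤ ‖p (v 0)‖ := by
      have h4 : ‖x₀‖ - ‖p (v 0)‖ ≤ ‖p (v 0) - x₀‖ := by
        rw [norm_sub_rev]
        exact norm_sub_norm_le _ _
      rw [hx₀] at h4
      linarith
    have hq : ‖q (v 0)‖ ≤ ε/4 := by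
      have h2 := hnorm (v 0)
      linarith
    rw [mem_closedBall, dist_eq_norm]
    have hsplit : ‖v 0 - j x₀‖ = ‖p (v 0) - x₀‖ + ‖q (v 0)‖ := by
      rw [hnorm (v 0 - j x₀), map_sub, map_sub, hpj, hqj, sub_zero]
    rw [hsplit]
    linarith

lemma two_mem_TccSet (E : Type*) [NormedAddCommGroup E] [NormedSpace ℝ E] [Nontrivial E] :
    (2:ℝ) ∈ TccSet E := by
  obtain ⟨x, hx⟩ := exists_norm_eq E zero_le_one
  refine ⟨two_pos, x, hx, 1, fun _ => 1, fun _ => closedBall 0 1, fun _ => zero_le_one,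
    by simp, fun _ => ⟨⟨0, by simp⟩, Set.univ, isWeaklyOpen_univ, by simp⟩, ?_⟩
  rintro z ⟨v, hv, rfl⟩
  rw [Fin.sum_univ_one, one_smul, mem_closedBall]
  have hb := mem_closedBall_zero_iff.mp (hv 0)
  calc dist (v 0) x ≤ ‖v 0‖ + ‖x‖ := dist_le_norm_add_norm _ _
    _ ≤ 2 := by rw [hx]; linarith

lemma Tcc_le_side [Nontrivial E]
    (p : G →L[ℝ] E) (q : G →L[ℝ] F) (j : E →L[ℝ] G)
    (hnorm : ∀ z, ‖z‖ = ‖p z‖ + ‖q z‖) (hpj : ∀ x, p (j x) = x) (hqj : ∀ x, q (j x) = 0) :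
    Tcc G ≤ Tcc E := by
  have hbdd : BddBelow (TccSet G) := ⟨0, fun s hs => hs.1.le⟩
  by_cases hfd : FiniteDimensional ℝ E
  · have h0 : Tcc G ≤ 0 := by
      rw [Tcc_eq_sInf]
      refine le_of_forall_gt_imp_ge_of_dense fun a ha => ?_
      exact csInf_le hbdd (mem_TccSet_findim p q j hnorm hpj hqj ha)
    refine h0.trans ?_
    rw [Tcc_eq_sInf]
    exact Real.sInf_nonneg fun s hs => hs.1.le
  · refine le_of_forall_gt_imp_ge_of_dense fun a ha => ?_
    have hTccE : Tcc E = sInf (TccSet E) := rfl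
    obtain ⟨rr, hrr, hlt⟩ := Real.lt_sInf_add_pos ⟨2, two_mem_TccSet E⟩
      (show 0 < (a - Tcc E)/2 by linarith)
    have hmem : rr + (a - Tcc E)/2 ∈ TccSet G :=
      mem_TccSet_infdim hfd p q j hnorm hpj hqj (by linarith) hrr
    have h2 : Tcc G ≤ rr + (a - Tcc E)/2 := csInf_le hbdd hmem
    rw [← hTccE] at hlt
    linarith

end Aux2



section Glue

open scoped ENNReal

variable (Y : Type*) [NormedAddCommGroup Y] [NormedSpace ℝ Y]

/-- Projection onto the first factor of an `ℓ₁`-sum. -/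
def auxPX : WithLp 1 (X × Y) →L[ℝ] X :=
  (ContinuousLinearMap.fst ℝ X Y).comp
    (WithLp.prodContinuousLinearEquiv 1 ℝ X Y : WithLp 1 (X × Y) →L[ℝ] X × Y)

/-- Projection onto the second factor of an `ℓ₁`-sum. -/
def auxQY : WithLp 1 (X × Y) →L[ℝ] Y :=
  (ContinuousLinearMap.snd ℝ X Y).comp
    (WithLp.prodContinuousLinearEquiv 1 ℝ X Y : WithLp 1 (X × Y) →L[ℝ] X × Y)

/-- Inclusion of the first factor into an `ℓ₁`-sum. -/
def auxJX : X →L[ℝ] WithLp 1 (X × Y) :=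
  ((WithLp.prodContinuousLinearEquiv 1 ℝ X Y).symm : X × Y →L[ℝ] WithLp 1 (X × Y)).comp
    (ContinuousLinearMap.inl ℝ X Y)

/-- Inclusion of the second factor into an `ℓ₁`-sum. -/
def auxJY : Y →L[ℝ] WithLp 1 (X × Y) :=
  ((WithLp.prodContinuousLinearEquiv 1 ℝ X Y).symm : X × Y →L[ℝ] WithLp 1 (X × Y)).comp
    (ContinuousLinearMap.inr ℝ X Y)

lemma aux_norm (z : WithLp 1 (X × Y)) : ‖z‖ = ‖auxPX X Y z‖ + ‖auxQY X Y z‖ := by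
  have h := WithLp.prod_norm_eq_add (p := (1:ℝ≥0∞)) (by norm_num) z
  simp only [ENNReal.toReal_one, Real.rpow_one, one_div, inv_one] at h
  exact h

end Glue

theorem stmt_14 (X Y : Type*) [NormedAddCommGroup X] [NormedSpace ℝ X]
    [CompleteSpace X] [Nontrivial X] [NormedAddCommGroup Y] [NormedSpace ℝ Y]
    [CompleteSpace Y] [Nontrivial Y] :
    Tcc (WithLp 1 (X × Y)) ≤ min (Tcc X) (Tcc Y) := by
  refine le_min ?_ ?_
  · exact Tcc_le_side (auxPX X Y) (auxQY X Y) (auxJX X Y) (aux_norm X Y)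
      (fun x => rfl) (fun x => rfl)
  · exact Tcc_le_side (auxQY X Y) (auxPX X Y) (auxJY X Y)
      (fun z => by rw [aux_norm X Y z]; ring) (fun y => rfl) (fun y => rfl)
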